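/- If the velocity nodes satisfy the symmetry Σ_j Δv v_j χ_{k,j} = 0 for k = 1,2, then the first moment J_h satisfies the improved bound ‖J_h‖₂ ≤ √(2 max(ρ∞ D₁^Δ, ρ∞⁻¹ D₂^Δ)) ‖(I - Π)F‖_Δ. -/

import Mathlib

/-- Discrete macroscopic density. -/
noncomputable def rhoD (N : ℕ) (J : Type*) [Fintype J] (Δv : ℝ)
    (f : ZMod N → J → ℝ) (i : ZMod N) : ℝ := ∑ j : J, Δv * f i j

/-- Discrete weighted inner product ⟨F₁,F₂⟩_Δ on pairs F_k = (f_k, g_k). -/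
noncomputable def ipD (N : ℕ) [NeZero N] (J : Type*) [Fintype J] (Δx Δv ρ : ℝ)
    (χ1 χ2 : J → ℝ) (f1 g1 f2 g2 : ZMod N → J → ℝ) : ℝ :=
  ∑ i : ZMod N, ∑ j : J, Δx * Δv *
    (f1 i j * f2 i j / (χ1 j * ρ) + g1 i j * g2 i j * ρ / χ2 j)

/-- First component of the projection Π onto the kernel of the linearized collision operator. -/
noncomputable def Pf (N : ℕ) (J : Type*) [Fintype J] (Δv ρ : ℝ) (χ1 : J → ℝ)
    (f g : ZMod N → J → ℝ) (i : ZMod N) (j : J) : ℝ :=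
  (rhoD N J Δv f i - rhoD N J Δv g i) / (ρ ^ 2 + 1) * (ρ ^ 2 * χ1 j)

/-- Second component of the projection Π. -/
noncomputable def Pg (N : ℕ) (J : Type*) [Fintype J] (Δv ρ : ℝ) (χ2 : J → ℝ)
    (f g : ZMod N → J → ℝ) (i : ZMod N) (j : J) : ℝ :=
  (rhoD N J Δv f i - rhoD N J Δv g i) / (ρ ^ 2 + 1) * (-χ2 j)

/-- Improved first moment estimate: ‖J_h‖₂ ≤ √(2 max(ρ∞ D₁^Δ, ρ∞⁻¹ D₂^Δ)) ‖(I-Π)F‖_Δ. -/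
theorem first_moment_estimate_micro (N : ℕ) [NeZero N] (J : Type*) [Fintype J]
    (Δx Δv ρ : ℝ) (hΔx : 0 < Δx) (hΔv : 0 < Δv) (hρ : 0 < ρ)
    (v : J → ℝ) (χ1 χ2 : J → ℝ) (hχ1 : ∀ j, 0 < χ1 j) (hχ2 : ∀ j, 0 < χ2 j)
    (hv1 : (∑ j : J, Δv * v j * χ1 j) = 0) (hv2 : (∑ j : J, Δv * v j * χ2 j) = 0)
    (f g : ZMod N → J → ℝ) :
    Real.sqrt (∑ i : ZMod N, Δx * (∑ j : J, Δv * v j * (f i j - g i j)) ^ 2)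
      ≤ Real.sqrt (2 * max (ρ * ∑ j : J, Δv * (v j) ^ 2 * χ1 j)
            (ρ⁻¹ * ∑ j : J, Δv * (v j) ^ 2 * χ2 j)) *
        Real.sqrt (ipD N J Δx Δv ρ χ1 χ2
          (fun i j => f i j - Pf N J Δv ρ χ1 f g i j)
          (fun i j => g i j - Pg N J Δv ρ χ2 f g i j)
          (fun i j => f i j - Pf N J Δv ρ χ1 f g i j)
          (fun i j => g i j - Pg N J Δv ρ χ2 f g i j)) := by
  classical
  set F : ZMod N → J → ℝ := fun i j => f i j - Pf N J Δv ρ χ1 f g i j with hF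
  set G : ZMod N → J → ℝ := fun i j => g i j - Pg N J Δv ρ χ2 f g i j with hG
  set D1 := ∑ j : J, Δv * (v j) ^ 2 * χ1 j with hD1
  set D2 := ∑ j : J, Δv * (v j) ^ 2 * χ2 j with hD2
  set M := max (ρ * D1) (ρ⁻¹ * D2) with hM
  have hD1nn : 0 ≤ D1 := Finset.sum_nonneg fun j _ => by
    have := (hχ1 j).le; positivity
  have hMnn : 0 ≤ M := le_max_of_le_left (by positivity)
  set Q := ipD N J Δx Δv ρ χ1 χ2 F G F G with hQ
  have key : ∀ i : ZMod N, (∑ j : J, Δv * v j * (f i j - g i j)) ^ 2 ≤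
      2 * M * (∑ j : J, Δv * (F i j ^ 2 / (χ1 j * ρ) + G i j ^ 2 * ρ / χ2 j)) := by
    intro i
    set c := (rhoD N J Δv f i - rhoD N J Δv g i) / (ρ ^ 2 + 1) with hc
    have h0 : (∑ j : J, Δv * v j * (f i j - g i j)) = ∑ j : J, Δv * v j * (F i j - G i j) := by
      have e : ∀ j : J, Δv * v j * (F i j - G i j)
          = Δv * v j * (f i j - g i j)
            - c * ρ ^ 2 * (Δv * v j * χ1 j) - c * (Δv * v j * χ2 j) := by
        intro j
        simp only [hF, hG, Pf, Pg, hc]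
        ring
      rw [Finset.sum_congr rfl fun j _ => e j]
      simp only [Finset.sum_sub_distrib, ← Finset.mul_sum, hv1, hv2, mul_zero, sub_zero]
    rw [h0]
    set A := ∑ j : J, Δv * v j * F i j with hA
    set B := ∑ j : J, Δv * v j * G i j with hB
    have hAB : (∑ j : J, Δv * v j * (F i j - G i j)) = A - B := by
      simp only [hA, hB, ← Finset.sum_sub_distrib]
      exact Finset.sum_congr rfl fun j _ => by ring
    rw [hAB]
    set AA := ∑ j : J, Δv * (F i j ^ 2 / (χ1 j * ρ)) with hAA
    set BB := ∑ j : J, Δv * (G i j ^ 2 * ρ / χ2 j) with hBB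
    have hAAnn : 0 ≤ AA := Finset.sum_nonneg fun j _ => by
      have := (hχ1 j).le; positivity
    have hBBnn : 0 ≤ BB := Finset.sum_nonneg fun j _ => by
      have := (hχ2 j).le; positivity
    have hA2 : A ^ 2 ≤ ρ * D1 * AA := by
      have cs := Finset.sum_mul_sq_le_sq_mul_sq Finset.univ
        (fun j => v j * Real.sqrt (Δv * (χ1 j * ρ)))
        (fun j => F i j * Real.sqrt (Δv / (χ1 j * ρ)))
      have e1 : ∀ j : J, (v j * Real.sqrt (Δv * (χ1 j * ρ))) *
          (F i j * Real.sqrt (Δv / (χ1 j * ρ))) = Δv * v j * F i j := by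
        intro j
        have hpos : 0 < χ1 j * ρ := mul_pos (hχ1 j) hρ
        rw [mul_mul_mul_comm, ← Real.sqrt_mul (by positivity)]
        have : Δv * (χ1 j * ρ) * (Δv / (χ1 j * ρ)) = Δv ^ 2 := by
          field_simp; ring_nf; simp [(hχ1 j).ne']
        rw [this, Real.sqrt_sq hΔv.le]; ring
      have e2 : ∀ j : J, (v j * Real.sqrt (Δv * (χ1 j * ρ))) ^ 2
          = ρ * (Δv * (v j) ^ 2 * χ1 j) := by
        intro j
        have hpos : 0 < χ1 j * ρ := mul_pos (hχ1 j) hρ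
        rw [mul_pow, Real.sq_sqrt (by positivity)]; ring
      have e3 : ∀ j : J, (F i j * Real.sqrt (Δv / (χ1 j * ρ))) ^ 2
          = Δv * (F i j ^ 2 / (χ1 j * ρ)) := by
        intro j
        have hpos : 0 < χ1 j * ρ := mul_pos (hχ1 j) hρ
        rw [mul_pow, Real.sq_sqrt (by positivity)]; ring
      rw [Finset.sum_congr rfl fun j _ => e1 j, Finset.sum_congr rfl fun j _ => e2 j,
        Finset.sum_congr rfl fun j _ => e3 j, ← Finset.mul_sum] at cs
      calc A ^ 2 ≤ (ρ * D1) * AA := cs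
        _ = ρ * D1 * AA := by ring
    have hB2 : B ^ 2 ≤ ρ⁻¹ * D2 * BB := by
      have cs := Finset.sum_mul_sq_le_sq_mul_sq Finset.univ
        (fun j => v j * Real.sqrt (Δv * (χ2 j / ρ)))
        (fun j => G i j * Real.sqrt (Δv * ρ / χ2 j))
      have e1 : ∀ j : J, (v j * Real.sqrt (Δv * (χ2 j / ρ))) *
          (G i j * Real.sqrt (Δv * ρ / χ2 j)) = Δv * v j * G i j := by
        intro j
        have hpos : 0 < χ2 j := hχ2 j
        rw [mul_mul_mul_comm, ← Real.sqrt_mul (by positivity)]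
        have : Δv * (χ2 j / ρ) * (Δv * ρ / χ2 j) = Δv ^ 2 := by
          field_simp
        rw [this, Real.sqrt_sq hΔv.le]; ring
      have e2 : ∀ j : J, (v j * Real.sqrt (Δv * (χ2 j / ρ))) ^ 2
          = ρ⁻¹ * (Δv * (v j) ^ 2 * χ2 j) := by
        intro j
        have hpos : 0 < χ2 j := hχ2 j
        rw [mul_pow, Real.sq_sqrt (by positivity)]
        field_simp
      have e3 : ∀ j : J, (G i j * Real.sqrt (Δv * ρ / χ2 j)) ^ 2
          = Δv * (G i j ^ 2 * ρ / χ2 j) := by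
        intro j
        have hpos : 0 < χ2 j := hχ2 j
        rw [mul_pow, Real.sq_sqrt (by positivity)]; ring
      rw [Finset.sum_congr rfl fun j _ => e1 j, Finset.sum_congr rfl fun j _ => e2 j,
        Finset.sum_congr rfl fun j _ => e3 j, ← Finset.mul_sum] at cs
      calc B ^ 2 ≤ (ρ⁻¹ * D2) * BB := cs
        _ = ρ⁻¹ * D2 * BB := by ring
    have hsplit : (∑ j : J, Δv * (F i j ^ 2 / (χ1 j * ρ) + G i j ^ 2 * ρ / χ2 j))
        = AA + BB := by
      rw [hAA, hBB, ← Finset.sum_add_distrib]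
      exact Finset.sum_congr rfl fun j _ => by ring
    rw [hsplit]
    have h1 : ρ * D1 ≤ M := le_max_left _ _
    have h2 : ρ⁻¹ * D2 ≤ M := le_max_right _ _
    have hA2' : A ^ 2 ≤ M * AA := hA2.trans (mul_le_mul_of_nonneg_right h1 hAAnn)
    have hB2' : B ^ 2 ≤ M * BB := hB2.trans (mul_le_mul_of_nonneg_right h2 hBBnn)
    nlinarith [sq_nonneg (A + B)]
  have hsum : (∑ i : ZMod N, Δx * (∑ j : J, Δv * v j * (f i j - g i j)) ^ 2)
      ≤ 2 * M * Q := by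
    have hQeq : 2 * M * Q = ∑ i : ZMod N, Δx *
        (2 * M * (∑ j : J, Δv * (F i j ^ 2 / (χ1 j * ρ) + G i j ^ 2 * ρ / χ2 j))) := by
      rw [hQ, ipD, Finset.mul_sum]
      refine Finset.sum_congr rfl fun i _ => ?_
      rw [Finset.mul_sum, Finset.mul_sum, Finset.mul_sum]
      refine Finset.sum_congr rfl fun j _ => ?_
      ring
    rw [hQeq]
    exact Finset.sum_le_sum fun i _ =>
      mul_le_mul_of_nonneg_left (key i) hΔx.le
  calc Real.sqrt (∑ i : ZMod N, Δx * (∑ j : J, Δv * v j * (f i j - g i j)) ^ 2)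
      ≤ Real.sqrt (2 * M * Q) := Real.sqrt_le_sqrt hsum
    _ = Real.sqrt (2 * M) * Real.sqrt Q := Real.sqrt_mul (by positivity) _
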